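/- There exists a constant D > 0 such that for every r > 0, setting p = (−Dr, 0, 0) and q = (Dr, 0, 0), one has {x ∈ ℝ³ : d((0,0,0), x) < r} ⊆ J(p,q) and τ(p,q) = 2Dr, where d is the sub-Riemannian distance and τ the time separation function of the sub-Lorentzian Heisenberg group. -/

import Mathlib

open MeasureTheory Set

/-- `γ` is Lipschitz on `[0,1]`. -/
def IsLipCurve3 (γ : ℝ → ℝ × ℝ × ℝ) : Prop :=
  ∃ K, LipschitzOnWith K γ (Icc (0:ℝ) 1)

/-- A curve in the Heisenberg group is horizontal if, for almost every `t ∈ [0,1]`,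
`γ₃'(t) = (γ₁(t)γ₂'(t) − γ₁'(t)γ₂(t))/2`. -/
def Horizontal (γ : ℝ → ℝ × ℝ × ℝ) : Prop :=
  ∀ᵐ t ∂(volume.restrict (Icc (0:ℝ) 1)),
    deriv (fun s => (γ s).2.2) t =
      ((γ t).1 * deriv (fun s => (γ s).2.1) t -
        deriv (fun s => (γ s).1) t * (γ t).2.1) / 2

/-- A horizontal curve is future-directed causal if, for almost every `t ∈ [0,1]`,
`γ₁'(t) ≥ |γ₂'(t)|` and `γ₁'(t) > 0`. -/
def IsFDCausal3 (γ : ℝ → ℝ × ℝ × ℝ) : Prop :=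
  ∀ᵐ t ∂(volume.restrict (Icc (0:ℝ) 1)),
    |deriv (fun s => (γ s).2.1) t| ≤ deriv (fun s => (γ s).1) t ∧
      0 < deriv (fun s => (γ s).1) t

/-- A horizontal curve is future-directed timelike if, for almost every `t ∈ [0,1]`,
`γ₁'(t) > |γ₂'(t)|`. -/
def IsFDTimelike3 (γ : ℝ → ℝ × ℝ × ℝ) : Prop :=
  ∀ᵐ t ∂(volume.restrict (Icc (0:ℝ) 1)),
    |deriv (fun s => (γ s).2.1) t| < deriv (fun s => (γ s).1) t

/-- The Lorentzian length of a (causal) curve. -/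
noncomputable def lorLength3 (γ : ℝ → ℝ × ℝ × ℝ) : ℝ :=
  ∫ t in (0:ℝ)..1,
    Real.sqrt ((deriv (fun s => (γ s).1) t)^2 - (deriv (fun s => (γ s).2.1) t)^2)

/-- The sub-Riemannian length of a horizontal curve. -/
noncomputable def sRLength3 (γ : ℝ → ℝ × ℝ × ℝ) : ℝ :=
  ∫ t in (0:ℝ)..1,
    Real.sqrt ((deriv (fun s => (γ s).1) t)^2 + (deriv (fun s => (γ s).2.1) t)^2)

/-- Admissible (horizontal future-directed causal Lipschitz) curves from `p` to `q`. -/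
def AdmCurve (p q : ℝ × ℝ × ℝ) (γ : ℝ → ℝ × ℝ × ℝ) : Prop :=
  IsLipCurve3 γ ∧ Horizontal γ ∧ IsFDCausal3 γ ∧ γ 0 = p ∧ γ 1 = q

/-- Causal precedence: `p ≤ q`. -/
def CausalLE (p q : ℝ × ℝ × ℝ) : Prop :=
  p = q ∨ ∃ γ, AdmCurve p q γ

/-- The causal diamond `J(p,q)`. -/
def causalDiamond (p q : ℝ × ℝ × ℝ) : Set (ℝ × ℝ × ℝ) :=
  {r | CausalLE p r ∧ CausalLE r q}

/-- The time separation function `τ` (equal to `0`, by convention on real `sSup`,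
if there is no admissible curve). -/
noncomputable def timeSep (p q : ℝ × ℝ × ℝ) : ℝ :=
  sSup (lorLength3 '' {γ | AdmCurve p q γ})

/-- The sub-Riemannian distance. -/
noncomputable def sRDist (p q : ℝ × ℝ × ℝ) : ℝ :=
  sInf (sRLength3 '' {γ | IsLipCurve3 γ ∧ Horizontal γ ∧ γ 0 = p ∧ γ 1 = q})


section Aux
open Real Filter Topology


lemma deriv_bound_of_lipschitz {K : NNReal} {g : ℝ → ℝ} (hg : LipschitzWith K g) (t : ℝ) :
    |deriv g t| ≤ K := by
  simpa [Real.norm_eq_abs] using norm_deriv_le_of_lipschitz (𝕜 := ℝ) hg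

lemma lipschitz_integral_deriv {K : NNReal} {g : ℝ → ℝ} (hg : LipschitzWith K g)
    {u v : ℝ} (huv : u ≤ v) : ∫ t in u..v, deriv g t = g v - g u := by
  have hgc : Continuous g := hg.continuous
  have hmeas : Measurable (deriv g) := measurable_deriv g
  -- sequence of difference quotients
  set h : ℕ → ℝ := fun n => 1 / (n + 1) with hh
  have hhpos : ∀ n, 0 < h n := fun n => by positivity
  have hhto : Tendsto h atTop (𝓝 0) := tendsto_one_div_add_atTop_nhds_zero_nat
  set F : ℕ → ℝ → ℝ := fun n t => (g (t + h n) - g t) / h n with hF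
  -- a.e. convergence of F n t to deriv g t
  have hconv : ∀ᵐ t ∂(volume.restrict (Ioc u v)),
      Tendsto (fun n => F n t) atTop (𝓝 (deriv g t)) := by
    refine ae_restrict_of_ae ?_
    filter_upwards [hg.ae_differentiableAt (μ := volume)] with t ht
    have hda : HasDerivAt g (deriv g t) t := ht.hasDerivAt
    have hslope := hda.tendsto_slope_zero
    have hmem : Tendsto h atTop (𝓝[≠] (0:ℝ)) :=
      tendsto_nhdsWithin_of_tendsto_nhds_of_eventually_within _ hhto
        (Eventually.of_forall fun n => (hhpos n).ne')
    have := hslope.comp hmem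
    simpa [F, Function.comp_def, div_eq_inv_mul] using this
  -- dominated convergence
  have hbound : ∀ n, ∀ᵐ t ∂(volume.restrict (Ioc u v)), ‖F n t‖ ≤ (K : ℝ) := by
    intro n
    refine Eventually.of_forall fun t => ?_
    have := hg.dist_le_mul (t + h n) t
    simp only [Real.dist_eq, add_sub_cancel_left] at this
    rw [Real.norm_eq_abs, hF, abs_div, abs_of_pos (hhpos n)]
    rw [div_le_iff₀ (hhpos n)]
    simpa [abs_of_pos (hhpos n)] using this
  have hFmeas : ∀ n, AEStronglyMeasurable (F n) (volume.restrict (Ioc u v)) := by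
    intro n
    exact (((hgc.comp (continuous_id.add continuous_const)).sub hgc).div_const _).aestronglyMeasurable
  have hDCT := tendsto_integral_of_dominated_convergence (μ := volume.restrict (Ioc u v))
    (F := F) (f := deriv g) (fun _ => (K : ℝ)) hFmeas (integrable_const _) hbound hconv
  -- compute the integrals of F n
  have hgint : ∀ a b : ℝ, IntervalIntegrable g volume a b := fun a b =>
    hgc.intervalIntegrable a b
  have hInt : ∀ n, ∫ t in (Ioc u v), F n t = (1 / h n) * ((∫ t in v..(v + h n), g t) - ∫ t in u..(u + h n), g t) := by
    intro n
    have h1 : ∫ t in (Ioc u v), F n t = ∫ t in u..v, F n t := by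
      rw [intervalIntegral.integral_of_le huv]
    rw [h1]
    have : ∫ t in u..v, F n t = (1/ h n) * ((∫ t in u..v, g (t + h n)) - ∫ t in u..v, g t) := by
      simp only [hF, div_eq_inv_mul, one_div]
      rw [intervalIntegral.integral_const_mul, intervalIntegral.integral_sub
        (Continuous.intervalIntegrable (by continuity) _ _) (hgint u v)]
      ring
    rw [this, intervalIntegral.integral_comp_add_right g (h n)]
    congr 1
    have e1 : (∫ t in (u + h n)..(v + h n), g t) = (∫ t in (u+ h n)..v, g t) + ∫ t in v..(v + h n), g t :=
      (intervalIntegral.integral_add_adjacent_intervals (hgint _ _) (hgint _ _)).symm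
    have e2 : (∫ t in u..v, g t) = (∫ t in u..(u + h n), g t) + ∫ t in (u + h n)..v, g t :=
      (intervalIntegral.integral_add_adjacent_intervals (hgint _ _) (hgint _ _)).symm
    rw [e1, e2]; ring
  -- limits of the averaged integrals
  have hlim : ∀ w : ℝ, Tendsto (fun n => (1 / h n) * ∫ t in w..(w + h n), g t) atTop (𝓝 (g w)) := by
    intro w
    have hΦ : HasDerivAt (fun s => ∫ t in w..s, g t) (g w) w :=
      intervalIntegral.integral_hasDerivAt_right (hgint w w)
        hgc.aestronglyMeasurable.stronglyMeasurableAtFilter hgc.continuousAt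
    have hslope := hΦ.tendsto_slope_zero
    have hmem : Tendsto h atTop (𝓝[≠] (0:ℝ)) :=
      tendsto_nhdsWithin_of_tendsto_nhds_of_eventually_within _ hhto
        (Eventually.of_forall fun n => (hhpos n).ne')
    have := hslope.comp hmem
    simpa [Function.comp_def, div_eq_inv_mul, one_div] using this
  have hlim2 : Tendsto (fun n => ∫ t in (Ioc u v), F n t) atTop (𝓝 (g v - g u)) := by
    simp only [hInt, mul_sub]
    exact ((hlim v).sub (hlim u))
  have := tendsto_nhds_unique hDCT hlim2
  rw [intervalIntegral.integral_of_le huv, ← this]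



noncomputable def G3f (a b C B : ℝ) (t : ℝ) : ℝ :=
  (1/2) * ( a*C*t*Real.sin (2*π*t) + 2*a*C*Real.cos (2*π*t)/(2*π)
    + B*b*t*Real.cos (2*π*t) + (B*C*(2*π) - 2*B*b)*Real.sin (2*π*t)/(2*π)
    + (B*b - B*C*(2*π))*t ) - a*C/(2*π)

noncomputable def hCurve (p : ℝ×ℝ×ℝ) (a b C B : ℝ) (t : ℝ) : ℝ×ℝ×ℝ :=
  (p.1 + (a*t + B*(1 - Real.cos (2*π*t))),
   p.2.1 + (b*t + C*Real.sin (2*π*t)),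
   p.2.2 + G3f a b C B t
     + (p.1*(b*t + C*Real.sin (2*π*t)) - p.2.1*(a*t + B*(1 - Real.cos (2*π*t))))/2)

lemma hds (t : ℝ) : HasDerivAt (fun u : ℝ => Real.sin (2*π*u)) (2*π*Real.cos (2*π*t)) t := by
  have h1 : HasDerivAt (fun u : ℝ => 2*π*u) (2*π) t := by
    simpa using (hasDerivAt_id t).const_mul (2*π)
  have h2 : HasDerivAt (fun u : ℝ => Real.sin (2*π*u)) (Real.cos (2*π*t) * (2*π)) t :=
    HasDerivAt.comp t (Real.hasDerivAt_sin (2*π*t)) h1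
  convert h2 using 1; ring

lemma hdc (t : ℝ) : HasDerivAt (fun u : ℝ => Real.cos (2*π*u)) (-(2*π*Real.sin (2*π*t))) t := by
  have h1 : HasDerivAt (fun u : ℝ => 2*π*u) (2*π) t := by
    simpa using (hasDerivAt_id t).const_mul (2*π)
  have := (Real.hasDerivAt_cos (2*π*t)).comp t h1
  exact this.congr_deriv (by ring)

lemma hd_e1 (a B t : ℝ) :
    HasDerivAt (fun u => a*u + B*(1 - Real.cos (2*π*u))) (a + B*(2*π*Real.sin (2*π*t))) t := by
  have h := ((hasDerivAt_id t).const_mul a).add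
    (((hasDerivAt_const t (1:ℝ)).sub (hdc t)).const_mul B)
  exact h.congr_deriv (by ring)

lemma hd_e2 (b C t : ℝ) :
    HasDerivAt (fun u => b*u + C*Real.sin (2*π*u)) (b + C*(2*π*Real.cos (2*π*t))) t := by
  have h := ((hasDerivAt_id t).const_mul b).add ((hds t).const_mul C)
  exact h.congr_deriv (by ring)

lemma hd_G3f (a b C B t : ℝ) :
    HasDerivAt (G3f a b C B)
      (((a*t + B*(1 - Real.cos (2*π*t))) * (b + C*(2*π*Real.cos (2*π*t)))
        - (a + B*(2*π*Real.sin (2*π*t))) * (b*t + C*Real.sin (2*π*t)))/2) t := by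
  have A1 := ((hasDerivAt_id t).const_mul (a*C)).mul (hds t)
  have A2 := ((hdc t).const_mul (2*a*C)).div_const (2*π)
  have A3 := ((hasDerivAt_id t).const_mul (B*b)).mul (hdc t)
  have A4 := ((hds t).const_mul (B*C*(2*π) - 2*B*b)).div_const (2*π)
  have A5 := (hasDerivAt_id t).const_mul (B*b - B*C*(2*π))
  have h := ((((A1.add A2).add A3).add A4).add A5).const_mul (1/2)
  have h2 := h.sub_const (a*C/(2*π))
  have hG : G3f a b C B = fun t => (1/2) * ( a*C*t*Real.sin (2*π*t) + 2*a*C*Real.cos (2*π*t)/(2*π)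
    + B*b*t*Real.cos (2*π*t) + (B*C*(2*π) - 2*B*b)*Real.sin (2*π*t)/(2*π)
    + (B*b - B*C*(2*π))*t ) - a*C/(2*π) := rfl
  rw [hG]
  refine h2.congr_deriv ?_
  have hpyth := Real.sin_sq_add_cos_sq (2*π*t)
  have hpi := Real.pi_ne_zero
  simp only [id_eq]
  field_simp
  linear_combination (2*B*C*π) * hpyth

lemma hd_c1 (p : ℝ×ℝ×ℝ) (a b C B : ℝ) (t : ℝ) :
    HasDerivAt (fun s => (hCurve p a b C B s).1) (a + B*(2*π*Real.sin (2*π*t))) t := by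
  have : (fun s => (hCurve p a b C B s).1)
      = fun u => p.1 + (a*u + B*(1 - Real.cos (2*π*u))) := rfl
  rw [this]
  exact (hd_e1 a B t).const_add p.1

lemma hd_c2 (p : ℝ×ℝ×ℝ) (a b C B : ℝ) (t : ℝ) :
    HasDerivAt (fun s => (hCurve p a b C B s).2.1) (b + C*(2*π*Real.cos (2*π*t))) t := by
  have : (fun s => (hCurve p a b C B s).2.1)
      = fun u => p.2.1 + (b*u + C*Real.sin (2*π*u)) := rfl
  rw [this]
  exact (hd_e2 b C t).const_add p.2.1

lemma hd_c3 (p : ℝ×ℝ×ℝ) (a b C B : ℝ) (t : ℝ) :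
    HasDerivAt (fun s => (hCurve p a b C B s).2.2)
      (((a*t + B*(1 - Real.cos (2*π*t))) * (b + C*(2*π*Real.cos (2*π*t)))
        - (a + B*(2*π*Real.sin (2*π*t))) * (b*t + C*Real.sin (2*π*t)))/2
       + (p.1 * (b + C*(2*π*Real.cos (2*π*t))) - p.2.1 * (a + B*(2*π*Real.sin (2*π*t))))/2) t := by
  have heq : (fun s => (hCurve p a b C B s).2.2)
      = fun u => p.2.2 + G3f a b C B u
        + (p.1*(b*u + C*Real.sin (2*π*u)) - p.2.1*(a*u + B*(1 - Real.cos (2*π*u))))/2 := rfl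
  rw [heq]
  exact (((hd_G3f a b C B t).const_add p.2.2).add
    ((((hd_e2 b C t).const_mul p.1).sub ((hd_e1 a B t).const_mul p.2.1)).div_const 2))

/-- endpoint lemmas -/
lemma hCurve_zero (p : ℝ×ℝ×ℝ) (a b C B : ℝ) : hCurve p a b C B 0 = p := by
  obtain ⟨p1, p2, p3⟩ := p
  simp only [hCurve, G3f, mul_zero, Real.cos_zero, Real.sin_zero, Prod.mk.injEq]
  refine ⟨by ring, by ring, ?_⟩
  have hpi := Real.pi_ne_zero
  field_simp
  ring

lemma hCurve_one (p : ℝ×ℝ×ℝ) (a b C B : ℝ) :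
    hCurve p a b C B 1 = (p.1 + a, p.2.1 + b, p.2.2 + (B*b - π*B*C) + (p.1*b - p.2.1*a)/2) := by
  obtain ⟨p1, p2, p3⟩ := p
  simp only [hCurve, G3f, mul_one, Real.cos_two_pi, Real.sin_two_pi, Prod.mk.injEq]
  refine ⟨by ring, by ring, ?_⟩
  have hpi := Real.pi_ne_zero
  field_simp
  ring

/-- Lipschitz helper -/
lemma lipOn_of_hasDerivAt {f f' : ℝ → ℝ} (h : ∀ t, HasDerivAt f (f' t) t) (hc : Continuous f') :
    ∃ K : NNReal, LipschitzOnWith K f (Icc (0:ℝ) 1) := by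
  obtain ⟨M, hM⟩ := (isCompact_Icc (a := (0:ℝ)) (b := 1)).exists_bound_of_continuousOn
    hc.continuousOn
  refine ⟨Real.toNNReal M, (convex_Icc (0:ℝ) 1).lipschitzOnWith_of_nnnorm_deriv_le
    (fun x _ => (h x).differentiableAt) (fun x hx => ?_)⟩
  rw [(h x).deriv, ← NNReal.coe_le_coe, coe_nnnorm, Real.coe_toNNReal']
  exact le_trans (hM x hx) (le_max_left _ _)

lemma hCurve_lip (p : ℝ×ℝ×ℝ) (a b C B : ℝ) : IsLipCurve3 (hCurve p a b C B) := by
  obtain ⟨K1, h1⟩ := lipOn_of_hasDerivAt (fun t => hd_c1 p a b C B t) (by fun_prop)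
  obtain ⟨K2, h2⟩ := lipOn_of_hasDerivAt (fun t => hd_c2 p a b C B t) (by fun_prop)
  obtain ⟨K3, h3⟩ := lipOn_of_hasDerivAt (fun t => hd_c3 p a b C B t) (by fun_prop)
  exact ⟨max K1 (max K2 K3), h1.prodMk (h2.prodMk h3)⟩

lemma hCurve_horizontal (p : ℝ×ℝ×ℝ) (a b C B : ℝ) : Horizontal (hCurve p a b C B) := by
  refine Filter.Eventually.of_forall fun t => ?_
  rw [(hd_c3 p a b C B t).deriv, (hd_c2 p a b C B t).deriv, (hd_c1 p a b C B t).deriv]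
  simp only [hCurve]
  ring

lemma hCurve_causal (p : ℝ×ℝ×ℝ) (a b C B : ℝ)
    (hcaus : |b| + 2*π*|C| + 2*π*|B| < a) : IsFDCausal3 (hCurve p a b C B) := by
  refine Filter.Eventually.of_forall fun t => ?_
  rw [(hd_c2 p a b C B t).deriv, (hd_c1 p a b C B t).deriv]
  have hπ : (0:ℝ) < 2*π := by positivity
  have hsin : |Real.sin (2*π*t)| ≤ 1 :=
    abs_le.mpr ⟨Real.neg_one_le_sin _, Real.sin_le_one _⟩
  have hcos : |Real.cos (2*π*t)| ≤ 1 :=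
    abs_le.mpr ⟨Real.neg_one_le_cos _, Real.cos_le_one _⟩
  have hB : |B*(2*π*Real.sin (2*π*t))| ≤ 2*π*|B| := by
    rw [abs_mul, abs_mul, abs_of_pos hπ]
    calc |B| * (2*π*|Real.sin (2*π*t)|) ≤ |B| * (2*π*1) := by
          gcongr
      _ = 2*π*|B| := by ring
  have hC : |C*(2*π*Real.cos (2*π*t))| ≤ 2*π*|C| := by
    rw [abs_mul, abs_mul, abs_of_pos hπ]
    calc |C| * (2*π*|Real.cos (2*π*t)|) ≤ |C| * (2*π*1) := by
          gcongr
      _ = 2*π*|C| := by ring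
  have key : -(2*π*|B|) ≤ B*(2*π*Real.sin (2*π*t)) := neg_le_of_abs_le hB
  constructor
  · have h1 : |b + C*(2*π*Real.cos (2*π*t))| ≤ |b| + 2*π*|C| :=
      le_trans (abs_add_le _ _) (by linarith)
    linarith [abs_nonneg B]
  · have g1 : 0 ≤ 2*π*|C| := by positivity
    have g2 : 0 ≤ 2*π*|B| := by positivity
    linarith [abs_nonneg b]

lemma hCurve_adm (p : ℝ×ℝ×ℝ) (a b C B : ℝ) (hcaus : |b| + 2*π*|C| + 2*π*|B| < a) :
    AdmCurve p (p.1 + a, p.2.1 + b, p.2.2 + (B*b - π*B*C) + (p.1*b - p.2.1*a)/2)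
      (hCurve p a b C B) :=
  ⟨hCurve_lip p a b C B, hCurve_horizontal p a b C B, hCurve_causal p a b C B hcaus,
    hCurve_zero p a b C B, hCurve_one p a b C B⟩

lemma intervalIntegrable_of_ae_bound {f : ℝ → ℝ} (hm : Measurable f) {c : ℝ}
    (hb : ∀ᵐ t ∂(volume.restrict (Ioc (0:ℝ) 1)), |f t| ≤ c) :
    IntervalIntegrable f volume 0 1 := by
  rw [intervalIntegrable_iff, uIoc_of_le (by norm_num : (0:ℝ) ≤ 1)]
  refine Integrable.mono' (g := fun _ => c)
    (integrableOn_const (C := c) measure_Ioc_lt_top.ne)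
    hm.aestronglyMeasurable ?_
  simpa [Real.norm_eq_abs] using hb

lemma restrict_Icc_eq_Ioo :
    volume.restrict (Icc (0:ℝ) 1) = volume.restrict (Ioo (0:ℝ) 1) :=
  (Measure.restrict_congr_set Ioo_ae_eq_Icc).symm

lemma restrict_Ioc_eq_Ioo :
    volume.restrict (Ioc (0:ℝ) 1) = volume.restrict (Ioo (0:ℝ) 1) :=
  (Measure.restrict_congr_set Ioo_ae_eq_Ioc).symm

lemma lorLength3_straight (p : ℝ×ℝ×ℝ) (a : ℝ) (ha : 0 ≤ a) :
    lorLength3 (hCurve p a 0 0 0) = a := by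
  have key : ∀ t : ℝ, Real.sqrt ((deriv (fun s => (hCurve p a 0 0 0 s).1) t)^2
      - (deriv (fun s => (hCurve p a 0 0 0 s).2.1) t)^2) = a := by
    intro t
    rw [(hd_c1 p a 0 0 0 t).deriv, (hd_c2 p a 0 0 0 t).deriv]
    simp [Real.sqrt_sq ha]
  rw [lorLength3]
  simp only [key]
  simp

lemma lorLength3_le_of_adm {p q : ℝ×ℝ×ℝ} {γ : ℝ → ℝ×ℝ×ℝ} (h : AdmCurve p q γ) :
    lorLength3 γ ≤ q.1 - p.1 := by
  obtain ⟨⟨K, hK⟩, _, hcaus, h0, h1⟩ := h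
  have hKf : LipschitzOnWith (1*K) (fun s => (γ s).1) (Icc 0 1) :=
    LipschitzWith.comp_lipschitzOnWith LipschitzWith.prod_fst hK
  obtain ⟨G, hG, hEq⟩ := hKf.extend_real
  have hd_eq : ∀ t ∈ Ioo (0:ℝ) 1, deriv (fun s => (γ s).1) t = deriv G t := by
    intro t ht
    exact Filter.EventuallyEq.deriv_eq
      (Filter.eventuallyEq_of_mem (Icc_mem_nhds ht.1 ht.2) hEq)
  have hGd_bd : ∀ t, |deriv G t| ≤ ((1*K : NNReal) : ℝ) :=
    fun t => deriv_bound_of_lipschitz hG t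
  have hGint : IntervalIntegrable (deriv G) volume 0 1 :=
    intervalIntegrable_of_ae_bound (measurable_deriv G)
      (Filter.Eventually.of_forall fun t => hGd_bd t)
  have hcaus' := hcaus
  simp only [IsFDCausal3] at hcaus'
  rw [restrict_Icc_eq_Ioo] at hcaus'
  have hle : ∀ᵐ t ∂(volume.restrict (Icc (0:ℝ) 1)),
      Real.sqrt ((deriv (fun s => (γ s).1) t)^2 - (deriv (fun s => (γ s).2.1) t)^2)
        ≤ deriv G t := by
    rw [restrict_Icc_eq_Ioo]
    filter_upwards [hcaus', ae_restrict_mem measurableSet_Ioo] with t htc htm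
    calc Real.sqrt ((deriv (fun s => (γ s).1) t)^2 - (deriv (fun s => (γ s).2.1) t)^2)
        ≤ Real.sqrt ((deriv (fun s => (γ s).1) t)^2) :=
          Real.sqrt_le_sqrt (sub_le_self _ (sq_nonneg _))
      _ = |deriv (fun s => (γ s).1) t| := Real.sqrt_sq_eq_abs _
      _ = deriv (fun s => (γ s).1) t := abs_of_pos htc.2
      _ = deriv G t := hd_eq t htm
  have hlhs_int : IntervalIntegrable (fun t =>
      Real.sqrt ((deriv (fun s => (γ s).1) t)^2 - (deriv (fun s => (γ s).2.1) t)^2))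
      volume 0 1 := by
    apply intervalIntegrable_of_ae_bound (c := ((1*K : NNReal) : ℝ))
    · exact (((measurable_deriv _).pow_const 2).sub ((measurable_deriv _).pow_const 2)).sqrt
    · rw [restrict_Ioc_eq_Ioo]
      filter_upwards [hcaus', ae_restrict_mem measurableSet_Ioo] with t htc htm
      rw [abs_of_nonneg (Real.sqrt_nonneg _)]
      calc Real.sqrt ((deriv (fun s => (γ s).1) t)^2 - (deriv (fun s => (γ s).2.1) t)^2)
          ≤ Real.sqrt ((deriv (fun s => (γ s).1) t)^2) :=
            Real.sqrt_le_sqrt (sub_le_self _ (sq_nonneg _))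
        _ = |deriv (fun s => (γ s).1) t| := Real.sqrt_sq_eq_abs _
        _ = |deriv G t| := by rw [hd_eq t htm]
        _ ≤ _ := hGd_bd t
  have hmono := intervalIntegral.integral_mono_ae_restrict
    (by norm_num : (0:ℝ) ≤ 1) hlhs_int hGint hle
  have hFTC : ∫ t in (0:ℝ)..1, deriv G t = G 1 - G 0 :=
    lipschitz_integral_deriv hG (by norm_num)
  have hG0 : G 0 = p.1 := by
    have h := hEq (show (0:ℝ) ∈ Icc (0:ℝ) 1 by norm_num)
    simp only at h
    rw [← h, h0]
  have hG1 : G 1 = q.1 := by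
    have h := hEq (show (1:ℝ) ∈ Icc (0:ℝ) 1 by norm_num)
    simp only at h
    rw [← h, h1]
  rw [lorLength3]
  calc (∫ t in (0:ℝ)..1, Real.sqrt ((deriv (fun s => (γ s).1) t)^2
        - (deriv (fun s => (γ s).2.1) t)^2)) ≤ ∫ t in (0:ℝ)..1, deriv G t := hmono
    _ = G 1 - G 0 := hFTC
    _ = q.1 - p.1 := by rw [hG0, hG1]

lemma intervalIntegrable_of_ae_bound' {u v : ℝ} (huv : u ≤ v) {f : ℝ → ℝ} (hm : Measurable f)
    {c : ℝ} (hb : ∀ᵐ t ∂(volume.restrict (Ioc u v)), |f t| ≤ c) :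
    IntervalIntegrable f volume u v := by
  rw [intervalIntegrable_iff, uIoc_of_le huv]
  refine Integrable.mono' (g := fun _ => c)
    (integrableOn_const (C := c) measure_Ioc_lt_top.ne)
    hm.aestronglyMeasurable ?_
  simpa [Real.norm_eq_abs] using hb

lemma abs_le_sqrt_sq_add_sq (a b : ℝ) : |a| ≤ Real.sqrt (a^2 + b^2) := by
  rw [← Real.sqrt_sq_eq_abs]
  exact Real.sqrt_le_sqrt (by nlinarith [sq_nonneg b])

lemma abs_le_sqrt_sq_add_sq' (a b : ℝ) : |b| ≤ Real.sqrt (a^2 + b^2) := by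
  rw [← Real.sqrt_sq_eq_abs]
  exact Real.sqrt_le_sqrt (by nlinarith [sq_nonneg a])

lemma sqrt_sq_add_sq_le (a b : ℝ) : Real.sqrt (a^2 + b^2) ≤ |a| + |b| := by
  rw [show |a| + |b| = Real.sqrt ((|a| + |b|)^2) from
    (Real.sqrt_sq (by positivity)).symm]
  apply Real.sqrt_le_sqrt
  nlinarith [abs_nonneg a, abs_nonneg b, sq_abs a, sq_abs b, mul_nonneg (abs_nonneg a) (abs_nonneg b)]

lemma chow (x : ℝ×ℝ×ℝ) :
    ∃ γ, IsLipCurve3 γ ∧ Horizontal γ ∧ γ 0 = ((0:ℝ), (0:ℝ), (0:ℝ)) ∧ γ 1 = x := by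
  refine ⟨hCurve (0,0,0) x.1 x.2.1 ((x.2.1 - x.2.2)/π) 1, hCurve_lip _ _ _ _ _,
    hCurve_horizontal _ _ _ _ _, hCurve_zero _ _ _ _ _, ?_⟩
  rw [hCurve_one]
  have hpi := Real.pi_ne_zero
  obtain ⟨x1, x2, x3⟩ := x
  simp only [Prod.mk.injEq]
  refine ⟨by ring, by ring, ?_⟩
  field_simp
  ring

lemma bounds_of_curve {γ : ℝ → ℝ×ℝ×ℝ} {x : ℝ×ℝ×ℝ} (hlip : IsLipCurve3 γ)
    (hhor : Horizontal γ) (h0 : γ 0 = ((0:ℝ), (0:ℝ), (0:ℝ))) (h1 : γ 1 = x) :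
    |x.1| ≤ sRLength3 γ ∧ |x.2.1| ≤ sRLength3 γ ∧ |x.2.2| ≤ (sRLength3 γ)^2 := by
  obtain ⟨K, hK⟩ := hlip
  have hK1 : LipschitzOnWith (1*K) (fun s => (γ s).1) (Icc 0 1) :=
    LipschitzWith.comp_lipschitzOnWith LipschitzWith.prod_fst hK
  have hK2 : LipschitzOnWith (1*(1*K)) (fun s => (γ s).2.1) (Icc 0 1) :=
    LipschitzWith.comp_lipschitzOnWith LipschitzWith.prod_fst
      (LipschitzWith.comp_lipschitzOnWith LipschitzWith.prod_snd hK)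
  have hK3 : LipschitzOnWith (1*(1*K)) (fun s => (γ s).2.2) (Icc 0 1) :=
    LipschitzWith.comp_lipschitzOnWith LipschitzWith.prod_snd
      (LipschitzWith.comp_lipschitzOnWith LipschitzWith.prod_snd hK)
  obtain ⟨G1, hG1, hEq1⟩ := hK1.extend_real
  obtain ⟨G2, hG2, hEq2⟩ := hK2.extend_real
  obtain ⟨G3, hG3, hEq3⟩ := hK3.extend_real
  set M : ℝ := (K:ℝ) + 1 with hM
  have hM0 : 0 < M := by positivity
  have hcoe1 : ((1*K : NNReal) : ℝ) ≤ M := by push_cast; simp [hM]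
  have hcoe2 : ((1*(1*K) : NNReal) : ℝ) ≤ M := by push_cast; simp [hM]
  have hbd1 : ∀ t, |deriv G1 t| ≤ M := fun t =>
    le_trans (deriv_bound_of_lipschitz hG1 t) hcoe1
  have hbd2 : ∀ t, |deriv G2 t| ≤ M := fun t =>
    le_trans (deriv_bound_of_lipschitz hG2 t) hcoe2
  have h001 : G1 0 = 0 := by
    have h := hEq1 (show (0:ℝ) ∈ Icc (0:ℝ) 1 by norm_num); simp only at h
    rw [← h, h0]
  have h002 : G2 0 = 0 := by
    have h := hEq2 (show (0:ℝ) ∈ Icc (0:ℝ) 1 by norm_num); simp only at h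
    rw [← h, h0]
  have h003 : G3 0 = 0 := by
    have h := hEq3 (show (0:ℝ) ∈ Icc (0:ℝ) 1 by norm_num); simp only at h
    rw [← h, h0]
  have h101 : G1 1 = x.1 := by
    have h := hEq1 (show (1:ℝ) ∈ Icc (0:ℝ) 1 by norm_num); simp only at h
    rw [← h, h1]
  have h102 : G2 1 = x.2.1 := by
    have h := hEq2 (show (1:ℝ) ∈ Icc (0:ℝ) 1 by norm_num); simp only at h
    rw [← h, h1]
  have h103 : G3 1 = x.2.2 := by
    have h := hEq3 (show (1:ℝ) ∈ Icc (0:ℝ) 1 by norm_num); simp only at h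
    rw [← h, h1]
  have hd_eq1 : ∀ t ∈ Ioo (0:ℝ) 1, deriv (fun s => (γ s).1) t = deriv G1 t := fun t ht =>
    Filter.EventuallyEq.deriv_eq (Filter.eventuallyEq_of_mem (Icc_mem_nhds ht.1 ht.2) hEq1)
  have hd_eq2 : ∀ t ∈ Ioo (0:ℝ) 1, deriv (fun s => (γ s).2.1) t = deriv G2 t := fun t ht =>
    Filter.EventuallyEq.deriv_eq (Filter.eventuallyEq_of_mem (Icc_mem_nhds ht.1 ht.2) hEq2)
  have hd_eq3 : ∀ t ∈ Ioo (0:ℝ) 1, deriv (fun s => (γ s).2.2) t = deriv G3 t := fun t ht =>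
    Filter.EventuallyEq.deriv_eq (Filter.eventuallyEq_of_mem (Icc_mem_nhds ht.1 ht.2) hEq3)
  have hne : ∀ᵐ (t:ℝ) ∂volume, t ∉ ({(1:ℝ)} : Set ℝ) :=
    measure_eq_zero_iff_ae_notMem.mp Real.volume_singleton
  have hLen : sRLength3 γ = ∫ t in (0:ℝ)..1, Real.sqrt ((deriv G1 t)^2 + (deriv G2 t)^2) := by
    rw [sRLength3]
    apply intervalIntegral.integral_congr_ae
    filter_upwards [hne] with t ht htI
    rw [uIoc_of_le (by norm_num : (0:ℝ) ≤ 1)] at htI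
    have htIoo : t ∈ Ioo (0:ℝ) 1 := ⟨htI.1, lt_of_le_of_ne htI.2 (by simpa using ht)⟩
    rw [hd_eq1 t htIoo, hd_eq2 t htIoo]
  set L := ∫ t in (0:ℝ)..1, Real.sqrt ((deriv G1 t)^2 + (deriv G2 t)^2) with hLdef
  have hmeas_sqrt : Measurable (fun t => Real.sqrt ((deriv G1 t)^2 + (deriv G2 t)^2)) :=
    (((measurable_deriv G1).pow_const 2).add ((measurable_deriv G2).pow_const 2)).sqrt
  have hsqrtInt : IntervalIntegrable (fun t => Real.sqrt ((deriv G1 t)^2 + (deriv G2 t)^2))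
      volume 0 1 := by
    refine intervalIntegrable_of_ae_bound' (by norm_num) hmeas_sqrt (c := 2*M)
      (Filter.Eventually.of_forall fun t => ?_)
    rw [abs_of_nonneg (Real.sqrt_nonneg _)]
    calc Real.sqrt ((deriv G1 t)^2 + (deriv G2 t)^2) ≤ |deriv G1 t| + |deriv G2 t| :=
        sqrt_sq_add_sq_le _ _
      _ ≤ 2*M := by linarith [hbd1 t, hbd2 t]
  have hL0 : 0 ≤ L :=
    intervalIntegral.integral_nonneg (by norm_num) (fun u _ => Real.sqrt_nonneg _)
  have key1 : ∀ u ∈ Icc (0:ℝ) 1, |G1 u| ≤ L := by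
    intro u hu
    have hFTC : ∫ t in (0:ℝ)..u, deriv G1 t = G1 u - G1 0 := lipschitz_integral_deriv hG1 hu.1
    have habs1 : |G1 u| = |∫ t in (0:ℝ)..u, deriv G1 t| := by rw [hFTC, h001, sub_zero]
    rw [habs1]
    have hint1 : IntervalIntegrable (fun t => |deriv G1 t|) volume 0 u :=
      intervalIntegrable_of_ae_bound' hu.1 (measurable_deriv G1).abs (c := M)
        (Filter.Eventually.of_forall fun t => by rw [abs_abs]; exact hbd1 t)
    have hmono : IntervalIntegrable (fun t => Real.sqrt ((deriv G1 t)^2 + (deriv G2 t)^2))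
        volume 0 u := by
      apply hsqrtInt.mono_set
      rw [uIcc_of_le hu.1, uIcc_of_le (by norm_num : (0:ℝ) ≤ 1)]
      exact Icc_subset_Icc le_rfl hu.2
    calc |∫ t in (0:ℝ)..u, deriv G1 t| ≤ ∫ t in (0:ℝ)..u, |deriv G1 t| :=
        intervalIntegral.abs_integral_le_integral_abs hu.1
      _ ≤ ∫ t in (0:ℝ)..u, Real.sqrt ((deriv G1 t)^2 + (deriv G2 t)^2) :=
        intervalIntegral.integral_mono_on hu.1 hint1 hmono
          (fun t _ => abs_le_sqrt_sq_add_sq _ _)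
      _ ≤ L := intervalIntegral.integral_mono_interval le_rfl hu.1 hu.2
          (Filter.Eventually.of_forall fun t => Real.sqrt_nonneg _) hsqrtInt
  have key2 : ∀ u ∈ Icc (0:ℝ) 1, |G2 u| ≤ L := by
    intro u hu
    have hFTC : ∫ t in (0:ℝ)..u, deriv G2 t = G2 u - G2 0 := lipschitz_integral_deriv hG2 hu.1
    have habs1 : |G2 u| = |∫ t in (0:ℝ)..u, deriv G2 t| := by rw [hFTC, h002, sub_zero]
    rw [habs1]
    have hint1 : IntervalIntegrable (fun t => |deriv G2 t|) volume 0 u :=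
      intervalIntegrable_of_ae_bound' hu.1 (measurable_deriv G2).abs (c := M)
        (Filter.Eventually.of_forall fun t => by rw [abs_abs]; exact hbd2 t)
    have hmono : IntervalIntegrable (fun t => Real.sqrt ((deriv G1 t)^2 + (deriv G2 t)^2))
        volume 0 u := by
      apply hsqrtInt.mono_set
      rw [uIcc_of_le hu.1, uIcc_of_le (by norm_num : (0:ℝ) ≤ 1)]
      exact Icc_subset_Icc le_rfl hu.2
    calc |∫ t in (0:ℝ)..u, deriv G2 t| ≤ ∫ t in (0:ℝ)..u, |deriv G2 t| :=
        intervalIntegral.abs_integral_le_integral_abs hu.1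
      _ ≤ ∫ t in (0:ℝ)..u, Real.sqrt ((deriv G1 t)^2 + (deriv G2 t)^2) :=
        intervalIntegral.integral_mono_on hu.1 hint1 hmono
          (fun t _ => abs_le_sqrt_sq_add_sq' _ _)
      _ ≤ L := intervalIntegral.integral_mono_interval le_rfl hu.1 hu.2
          (Filter.Eventually.of_forall fun t => Real.sqrt_nonneg _) hsqrtInt
  refine ⟨?_, ?_, ?_⟩
  · rw [hLen]; rw [← h101]; exact key1 1 (by norm_num)
  · rw [hLen]; rw [← h102]; exact key2 1 (by norm_num)
  · -- third component
    have hFTC3 : ∫ t in (0:ℝ)..1, deriv G3 t = G3 1 - G3 0 :=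
      lipschitz_integral_deriv hG3 (by norm_num)
    simp only [Horizontal] at hhor
    rw [restrict_Icc_eq_Ioo] at hhor
    have hhor' := (ae_restrict_iff' measurableSet_Ioo).mp hhor
    have hcongr : (∫ t in (0:ℝ)..1, deriv G3 t)
        = ∫ t in (0:ℝ)..1, (G1 t * deriv G2 t - deriv G1 t * G2 t)/2 := by
      apply intervalIntegral.integral_congr_ae
      filter_upwards [hhor', hne] with t hth ht1 htI
      rw [uIoc_of_le (by norm_num : (0:ℝ) ≤ 1)] at htI
      have htIoo : t ∈ Ioo (0:ℝ) 1 := ⟨htI.1, lt_of_le_of_ne htI.2 (by simpa using ht1)⟩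
      have htIcc : t ∈ Icc (0:ℝ) 1 := ⟨le_of_lt htIoo.1, le_of_lt htIoo.2⟩
      rw [← hd_eq3 t htIoo, hth htIoo, hd_eq1 t htIoo, hd_eq2 t htIoo]
      have e1 : (γ t).1 = G1 t := hEq1 htIcc
      have e2 : (γ t).2.1 = G2 t := hEq2 htIcc
      rw [e1, e2]
    have hx3 : x.2.2 = ∫ t in (0:ℝ)..1, (G1 t * deriv G2 t - deriv G1 t * G2 t)/2 := by
      rw [← hcongr, hFTC3, h103, h003, sub_zero]
    have hmeas3 : Measurable (fun t => (G1 t * deriv G2 t - deriv G1 t * G2 t)/2) :=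
      (((hG1.continuous.measurable.mul (measurable_deriv G2)).sub
        ((measurable_deriv G1).mul hG2.continuous.measurable))).div_const 2
    have hint3 : IntervalIntegrable (fun t => |(G1 t * deriv G2 t - deriv G1 t * G2 t)/2|)
        volume 0 1 := by
      refine intervalIntegrable_of_ae_bound' (by norm_num) hmeas3.abs (c := M*M) ?_
      filter_upwards [ae_restrict_mem measurableSet_Ioc] with t ht
      rw [abs_abs]
      have htIcc : t ∈ Icc (0:ℝ) 1 := ⟨le_of_lt ht.1, ht.2⟩
      have u1 : |G1 t| ≤ M := by
        calc |G1 t| = |G1 t - G1 0| := by rw [h001, sub_zero]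
          _ ≤ ((1*K : NNReal) : ℝ) * |t - 0| := by
              simpa [Real.dist_eq] using hG1.dist_le_mul t 0
          _ ≤ M * 1 := by
              apply mul_le_mul hcoe1 _ (abs_nonneg _) (le_of_lt hM0)
              rw [sub_zero, abs_of_nonneg htIcc.1]; exact htIcc.2
          _ = M := mul_one M
      have u2 : |G2 t| ≤ M := by
        calc |G2 t| = |G2 t - G2 0| := by rw [h002, sub_zero]
          _ ≤ ((1*(1*K) : NNReal) : ℝ) * |t - 0| := by
              simpa [Real.dist_eq] using hG2.dist_le_mul t 0
          _ ≤ M * 1 := by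
              apply mul_le_mul hcoe2 _ (abs_nonneg _) (le_of_lt hM0)
              rw [sub_zero, abs_of_nonneg htIcc.1]; exact htIcc.2
          _ = M := mul_one M
      have v1 := hbd1 t; have v2 := hbd2 t
      have w1 : |G1 t * deriv G2 t| ≤ M * M :=
        (abs_mul _ _).le.trans (mul_le_mul u1 v2 (abs_nonneg _) (le_of_lt hM0))
      have w2 : |deriv G1 t * G2 t| ≤ M * M :=
        (abs_mul _ _).le.trans (mul_le_mul v1 u2 (abs_nonneg _) (le_of_lt hM0))
      have := abs_sub (G1 t * deriv G2 t) (deriv G1 t * G2 t)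
      rw [abs_div]
      rw [abs_of_pos (by norm_num : (0:ℝ) < 2)]
      have habs : |G1 t * deriv G2 t - deriv G1 t * G2 t|
          ≤ |G1 t * deriv G2 t| + |deriv G1 t * G2 t| := abs_sub _ _
      have hnum : |G1 t * deriv G2 t - deriv G1 t * G2 t| ≤ M*M + M*M := by linarith
      nlinarith [hnum]
    have hLsqInt : IntervalIntegrable
        (fun t => L * Real.sqrt ((deriv G1 t)^2 + (deriv G2 t)^2)) volume 0 1 :=
      hsqrtInt.const_mul L
    have hptwise : ∀ t ∈ Icc (0:ℝ) 1,
        |(G1 t * deriv G2 t - deriv G1 t * G2 t)/2|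
          ≤ L * Real.sqrt ((deriv G1 t)^2 + (deriv G2 t)^2) := by
      intro t ht
      have u1 := key1 t ht
      have u2 := key2 t ht
      have v1 := abs_le_sqrt_sq_add_sq (deriv G1 t) (deriv G2 t)
      have v2 := abs_le_sqrt_sq_add_sq' (deriv G1 t) (deriv G2 t)
      have hs0 := Real.sqrt_nonneg ((deriv G1 t)^2 + (deriv G2 t)^2)
      have habs : |G1 t * deriv G2 t - deriv G1 t * G2 t|
          ≤ |G1 t * deriv G2 t| + |deriv G1 t * G2 t| := abs_sub _ _
      have w1 : |G1 t * deriv G2 t| ≤ L * Real.sqrt ((deriv G1 t)^2 + (deriv G2 t)^2) :=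
        (abs_mul _ _).le.trans (mul_le_mul u1 v2 (abs_nonneg _) hL0)
      have w2 : |deriv G1 t * G2 t| ≤ Real.sqrt ((deriv G1 t)^2 + (deriv G2 t)^2) * L := by
        refine (abs_mul _ _).le.trans (mul_le_mul v1 u2 (abs_nonneg _) hs0)
      rw [abs_div, abs_of_pos (by norm_num : (0:ℝ) < 2)]
      rw [div_le_iff₀ (by norm_num : (0:ℝ) < 2)]
      nlinarith
    have hfinal : |x.2.2| ≤ L * L := by
      rw [hx3]
      calc |∫ t in (0:ℝ)..1, (G1 t * deriv G2 t - deriv G1 t * G2 t)/2|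
          ≤ ∫ t in (0:ℝ)..1, |(G1 t * deriv G2 t - deriv G1 t * G2 t)/2| :=
            intervalIntegral.abs_integral_le_integral_abs (by norm_num)
        _ ≤ ∫ t in (0:ℝ)..1, L * Real.sqrt ((deriv G1 t)^2 + (deriv G2 t)^2) :=
            intervalIntegral.integral_mono_on (by norm_num) hint3 hLsqInt hptwise
        _ = L * L := by rw [intervalIntegral.integral_const_mul]
    rw [hLen, sq]
    exact hfinal

lemma causal_left {r : ℝ} (hr : 0 < r) {x : ℝ×ℝ×ℝ} (hx1 : |x.1| ≤ r) (hx2 : |x.2.1| ≤ r)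
    (hx3 : |x.2.2| ≤ r^2) : CausalLE (-(100*r), 0, 0) x := by
  have hpi := Real.pi_pos
  have hpi4 := Real.pi_le_four
  have h1 := abs_le.mp hx1
  have h2 := abs_le.mp hx2
  have h3 := abs_le.mp hx3
  set a : ℝ := x.1 + 100*r with ha
  set Cc : ℝ := (2*r*x.2.1 - (x.2.2 + 50*r*x.2.1))/(π*(2*r)) with hCc
  have hcaus : |x.2.1| + 2*π*|Cc| + 2*π*|2*r| < a := by
    have hnum : |2*r*x.2.1 - (x.2.2 + 50*r*x.2.1)| ≤ 49*(r*r) := by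
      rw [abs_le]; constructor <;> nlinarith
    have habsC : |Cc| = |2*r*x.2.1 - (x.2.2 + 50*r*x.2.1)| / (π*(2*r)) := by
      rw [hCc, abs_div]
      congr 1
      exact abs_of_pos (by positivity)
    have hC2 : 2*π*|Cc| ≤ 53*r := by
      rw [habsC]
      have he : 2*π*(|2*r*x.2.1 - (x.2.2 + 50*r*x.2.1)| / (π*(2*r)))
          = |2*r*x.2.1 - (x.2.2 + 50*r*x.2.1)|/r := by
        field_simp
      rw [he, div_le_iff₀ hr]
      nlinarith
    have hB2 : 2*π*|2*r| ≤ 16*r := by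
      rw [abs_of_pos (by positivity)]; nlinarith
    linarith
  have hadm := hCurve_adm (-(100*r), 0, 0) a x.2.1 Cc (2*r) hcaus
  have hπC : π*(2*r)*Cc = 2*r*x.2.1 - (x.2.2 + 50*r*x.2.1) := by
    rw [hCc]; field_simp
  have hend : ((-(100*r), (0:ℝ), (0:ℝ)).1 + a, (-(100*r), (0:ℝ), (0:ℝ)).2.1 + x.2.1,
      (-(100*r), (0:ℝ), (0:ℝ)).2.2 + ((2*r)*x.2.1 - π*(2*r)*Cc)
        + ((-(100*r), (0:ℝ), (0:ℝ)).1*x.2.1 - (-(100*r), (0:ℝ), (0:ℝ)).2.1*a)/2) = x := by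
    have hxx : x = (x.1, x.2.1, x.2.2) := rfl
    rw [hxx]
    simp only [Prod.mk.injEq]
    refine ⟨by ring, by ring, ?_⟩
    rw [hπC]; ring
  rw [hend] at hadm
  exact Or.inr ⟨_, hadm⟩

lemma causal_right {r : ℝ} (hr : 0 < r) {x : ℝ×ℝ×ℝ} (hx1 : |x.1| ≤ r) (hx2 : |x.2.1| ≤ r)
    (hx3 : |x.2.2| ≤ r^2) : CausalLE x (100*r, 0, 0) := by
  have hpi := Real.pi_pos
  have hpi4 := Real.pi_le_four
  have h1 := abs_le.mp hx1
  have h2 := abs_le.mp hx2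
  have h3 := abs_le.mp hx3
  set a : ℝ := 100*r - x.1 with ha
  set Cc : ℝ := ((2*r)*(-x.2.1) - (-x.2.2 + 50*r*x.2.1))/(π*(2*r)) with hCc
  have hcaus : |(-x.2.1)| + 2*π*|Cc| + 2*π*|2*r| < a := by
    have hnum : |(2*r)*(-x.2.1) - (-x.2.2 + 50*r*x.2.1)| ≤ 53*(r*r) := by
      rw [abs_le]; constructor <;> nlinarith
    have habsC : |Cc| = |(2*r)*(-x.2.1) - (-x.2.2 + 50*r*x.2.1)| / (π*(2*r)) := by
      rw [hCc, abs_div]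
      congr 1
      exact abs_of_pos (by positivity)
    have hC2 : 2*π*|Cc| ≤ 53*r := by
      rw [habsC]
      have he : 2*π*(|(2*r)*(-x.2.1) - (-x.2.2 + 50*r*x.2.1)| / (π*(2*r)))
          = |(2*r)*(-x.2.1) - (-x.2.2 + 50*r*x.2.1)|/r := by
        field_simp
      rw [he, div_le_iff₀ hr]
      nlinarith
    have hB2 : 2*π*|2*r| ≤ 16*r := by
      rw [abs_of_pos (by positivity)]; nlinarith
    rw [abs_neg]
    linarith
  have hadm := hCurve_adm x a (-x.2.1) Cc (2*r) hcaus
  have hπC : π*(2*r)*Cc = (2*r)*(-x.2.1) - (-x.2.2 + 50*r*x.2.1) := by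
    rw [hCc]; field_simp
  have hend : (x.1 + a, x.2.1 + (-x.2.1),
      x.2.2 + ((2*r)*(-x.2.1) - π*(2*r)*Cc) + (x.1*(-x.2.1) - x.2.1*a)/2)
      = ((100*r : ℝ), (0:ℝ), (0:ℝ)) := by
    simp only [Prod.mk.injEq]
    refine ⟨by ring, by ring, ?_⟩
    rw [hπC]; ring
  rw [hend] at hadm
  exact Or.inr ⟨_, hadm⟩

end Aux

/-- there is a constant `D > 0` such that for every `r > 0`, the
sub-Riemannian ball of radius `r` around the origin is contained in the causal
diamond `J((−Dr,0,0),(Dr,0,0))`, whose vertices have time separation `2Dr`. -/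
theorem ball_subset_diamond :
    ∃ D : ℝ, 0 < D ∧ ∀ r : ℝ, 0 < r →
      {x : ℝ × ℝ × ℝ | sRDist (0, 0, 0) x < r} ⊆
        causalDiamond (-(D * r), 0, 0) (D * r, 0, 0) ∧
      timeSep (-(D * r), 0, 0) (D * r, 0, 0) = 2 * D * r := by
  refine ⟨100, by norm_num, fun r hr => ⟨?_, ?_⟩⟩
  · intro x hx
    simp only [Set.mem_setOf_eq] at hx
    rw [sRDist] at hx
    obtain ⟨γ₀, hγ₀⟩ := chow x
    have hS : (sRLength3 '' {γ | IsLipCurve3 γ ∧ Horizontal γ ∧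
        γ 0 = ((0:ℝ), (0:ℝ), (0:ℝ)) ∧ γ 1 = x}).Nonempty :=
      ⟨_, ⟨γ₀, hγ₀, rfl⟩⟩
    obtain ⟨ℓ, hmem, hℓ⟩ := exists_lt_of_csInf_lt hS hx
    obtain ⟨γ, hγ, rfl⟩ := hmem
    obtain ⟨hlip, hhor, hg0, hg1⟩ := hγ
    obtain ⟨b1, b2, b3⟩ := bounds_of_curve hlip hhor hg0 hg1
    have hL0 : (0:ℝ) ≤ sRLength3 γ := le_trans (abs_nonneg _) b1
    have hx1 : |x.1| ≤ r := le_of_lt (lt_of_le_of_lt b1 hℓ)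
    have hx2 : |x.2.1| ≤ r := le_of_lt (lt_of_le_of_lt b2 hℓ)
    have hx3 : |x.2.2| ≤ r^2 := le_trans b3 (by nlinarith)
    exact ⟨causal_left hr hx1 hx2 hx3, causal_right hr hx1 hx2 hx3⟩
  · have hadm : AdmCurve (-(100*r), 0, 0) ((100:ℝ)*r, 0, 0)
        (hCurve (-(100*r), 0, 0) (200*r) 0 0 0) := by
      have h := hCurve_adm (-(100*r), 0, 0) (200*r) 0 0 0
        (by simp only [abs_zero, mul_zero, add_zero, zero_add]; positivity)
      have hend : ((-(100*r), (0:ℝ), (0:ℝ)).1 + 200*r, (-(100*r), (0:ℝ), (0:ℝ)).2.1 + 0,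
          (-(100*r), (0:ℝ), (0:ℝ)).2.2 + ((0:ℝ)*0 - Real.pi*0*0)
            + ((-(100*r), (0:ℝ), (0:ℝ)).1*0 - (-(100*r), (0:ℝ), (0:ℝ)).2.1*(200*r))/2)
          = ((100:ℝ)*r, (0:ℝ), (0:ℝ)) := by
        simp only [Prod.mk.injEq]
        refine ⟨by ring, by ring, by ring⟩
      rw [hend] at h
      exact h
    rw [timeSep]
    have hub : ∀ y ∈ lorLength3 '' {γ | AdmCurve (-(100*r), 0, 0) ((100:ℝ)*r, 0, 0) γ},
        y ≤ 2*100*r := by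
      rintro y ⟨γ, hγ, rfl⟩
      have h := lorLength3_le_of_adm hγ
      simp only at h
      linarith
    have hmem : 2*100*r ∈ lorLength3 '' {γ | AdmCurve (-(100*r), 0, 0) ((100:ℝ)*r, 0, 0) γ} := by
      refine ⟨_, hadm, ?_⟩
      rw [lorLength3_straight _ _ (by positivity : (0:ℝ) ≤ 200*r)]
      ring
    exact le_antisymm (csSup_le ⟨_, hmem⟩ hub)
      (le_csSup ⟨2*100*r, fun y hy => hub y hy⟩ hmem)
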